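/- Let X be an uncountable set. Then there exists no reproducing kernel Hilbert space H on X such that ℓ∞(X) ⊆ H, where ℓ∞(X) is the space of all bounded real-valued functions on X. -/

import Mathlib

open scoped ENNReal

/-- If every `±1`-signed combination of the vectors `e y`, `y ∈ S`, has squared norm
at most `B`, then `∑ ‖e y‖² ≤ B`.  Proved by induction using the parallelogram law. -/
lemma signs_sum_sq_le {H : Type*} [NormedAddCommGroup H] [InnerProductSpace ℝ H]
    {ι' : Type*} [DecidableEq ι'] (S : Finset ι') (e : ι' → H) :
    ∀ B : ℝ, (∀ ε : ι' → ℝ, (∀ i, ε i = 1 ∨ ε i = -1) →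
      ‖∑ y ∈ S, ε y • e y‖ ^ 2 ≤ B) → ∑ y ∈ S, ‖e y‖ ^ 2 ≤ B := by
  induction S using Finset.induction_on with
  | empty =>
      intro B h
      simpa using h (fun _ => 1) (fun _ => Or.inl rfl)
  | insert a s ha IH =>
      intro B h
      have key : ∀ ε : ι' → ℝ, (∀ i, ε i = 1 ∨ ε i = -1) →
          ‖∑ y ∈ s, ε y • e y‖ ^ 2 ≤ B - ‖e a‖ ^ 2 := by
        intro ε hε
        set v := ∑ y ∈ s, ε y • e y with hv
        have hsum : ∀ (c : ℝ), ∑ y ∈ insert a s, (Function.update ε a c) y • e y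
            = c • e a + v := by
          intro c
          rw [Finset.sum_insert ha, Function.update_self]
          congr 1
          exact Finset.sum_congr rfl fun y hy => by
            rw [Function.update_of_ne (by rintro rfl; exact ha hy)]
        have hsigns : ∀ (c : ℝ), c = 1 ∨ c = -1 →
            (∀ i, Function.update ε a c i = 1 ∨ Function.update ε a c i = -1) := by
          intro c hc i
          by_cases hi : i = a
          · subst hi; rw [Function.update_self]; exact hc
          · rw [Function.update_of_ne hi]; exact hε i
        have h1 : ‖v + e a‖ ^ 2 ≤ B := by
          have := h (Function.update ε a 1) (hsigns 1 (Or.inl rfl))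
          rw [hsum 1, one_smul, add_comm] at this
          exact this
        have h2 : ‖v - e a‖ ^ 2 ≤ B := by
          have := h (Function.update ε a (-1)) (hsigns (-1) (Or.inr rfl))
          rw [hsum (-1), neg_one_smul, neg_add_eq_sub] at this
          exact this
        have par := parallelogram_law_with_norm ℝ v (e a)
        nlinarith [h1, h2, par]
      rw [Finset.sum_insert ha]
      have := IH (B - ‖e a‖ ^ 2) key
      linarith

/-- For an uncountable set `X`, there is no RKHS `H` on `X` (a Hilbert space of
real-valued functions on `X` with continuous point evaluations) such that
`ℓ∞(X) ⊆ H`. -/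
theorem no_RKHS_containing_bounded_functions
    {X : Type*} (hX : ¬ Countable X)
    (H : Type*) [NormedAddCommGroup H] [InnerProductSpace ℝ H] [CompleteSpace H]
    (ι : H →ₗ[ℝ] (X → ℝ)) (hinj : Function.Injective ι)
    (heval : ∀ x : X, Continuous fun h : H => ι h x)
    (hsub : ∀ f : X → ℝ, (∃ C : ℝ, ∀ x, |f x| ≤ C) → f ∈ Set.range ι) : False := by
  classical
  -- evaluation functionals
  let φ : X → (H →L[ℝ] ℝ) := fun x =>
    { toLinearMap := (LinearMap.proj x).comp ι, cont := heval x }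
  have hφ : ∀ x (h : H), φ x h = ι h x := fun x h => rfl
  -- preimages of the delta functions
  have hdelta : ∀ x : X, ∃ h : H, ι h = fun z => if z = x then (1:ℝ) else 0 := by
    intro x
    obtain ⟨h, hh⟩ := hsub (fun z => if z = x then (1:ℝ) else 0)
      ⟨1, fun z => by split <;> norm_num⟩
    exact ⟨h, hh⟩
  choose e he using hdelta
  have heval_e : ∀ x, φ x (e x) = 1 := by
    intro x; rw [hφ, he x]; simp
  have hlow : ∀ x : X, 1 ≤ ‖φ x‖ * ‖e x‖ := by
    intro x
    have h1 := (φ x).le_opNorm (e x)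
    rw [heval_e x] at h1
    simpa using h1
  -- pigeonhole: some level set of `‖φ ·‖` is uncountable (hence infinite)
  obtain ⟨n, hn⟩ : ∃ n : ℕ, ¬ ({y : X | ‖φ y‖ ≤ (n : ℝ)}).Countable := by
    by_contra hc
    push_neg at hc
    apply hX
    have hcov : (⋃ n : ℕ, {y : X | ‖φ y‖ ≤ (n : ℝ)}) = Set.univ := by
      ext x
      simp only [Set.mem_iUnion, Set.mem_setOf_eq, Set.mem_univ, iff_true]
      exact ⟨⌈‖φ x‖⌉₊, Nat.le_ceil _⟩
    have : (Set.univ : Set X).Countable := hcov ▸ Set.countable_iUnion hc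
    exact Set.countable_univ_iff.mp this
  have hninf : {y : X | ‖φ y‖ ≤ (n : ℝ)}.Infinite := fun hfin => hn hfin.countable
  -- the ℓ∞ space and the (linear) inclusion into H
  have hmem : ∀ f : lp (fun _ : X => ℝ) ⊤, ∃ C : ℝ, ∀ x, |(f : X → ℝ) x| ≤ C := fun f =>
    ⟨‖f‖, fun x => by
      rw [← Real.norm_eq_abs]; exact lp.norm_apply_le_norm ENNReal.top_ne_zero f x⟩
  have hT : ∀ f : lp (fun _ : X => ℝ) ⊤, ∃ h : H, ι h = f :=
    fun f => hsub f (hmem f)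
  choose T0 hT0 using hT
  let T : lp (fun _ : X => ℝ) ⊤ →ₗ[ℝ] H :=
    { toFun := T0
      map_add' := fun f g => hinj (by
        rw [hT0, map_add, hT0, hT0]; exact lp.coeFn_add f g)
      map_smul' := fun c f => hinj (by
        rw [hT0, map_smul, hT0]; exact lp.coeFn_smul c f) }
  have hTeq : ∀ f, ι (T f) = (f : X → ℝ) := hT0
  -- coordinate evaluations on lp ∞ are continuous
  have hev : ∀ x : X, Continuous fun f : lp (fun _ : X => ℝ) ⊤ => (f : X → ℝ) x := by
    intro x
    refine (LipschitzWith.of_dist_le_mul (K := 1) fun f g => ?_).continuous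
    rw [NNReal.coe_one, one_mul]
    have h1 : dist ((f : X → ℝ) x) ((g : X → ℝ) x) = ‖((f - g : lp (fun _ : X => ℝ) ⊤) : X → ℝ) x‖ := by
      rw [lp.coeFn_sub]
      simp [dist_eq_norm]
    rw [h1, dist_eq_norm]
    exact lp.norm_apply_le_norm ENNReal.top_ne_zero (f - g) x
  -- closed graph theorem: T is continuous
  have hgraph : IsClosed (T.graph : Set ((lp (fun _ : X => ℝ) ⊤) × H)) := by
    have hset : (T.graph : Set ((lp (fun _ : X => ℝ) ⊤) × H)) =
        ⋂ x : X, {p : (lp (fun _ : X => ℝ) ⊤) × H | ((p.1 : X → ℝ)) x = ι p.2 x} := by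
      ext p
      simp only [SetLike.mem_coe, LinearMap.mem_graph_iff, Set.mem_iInter, Set.mem_setOf_eq]
      constructor
      · rintro h x
        rw [h]
        exact congrFun (hTeq p.1).symm x
      · intro hp
        have h1 : ι p.2 = ι (T p.1) := by
          rw [hTeq]
          exact funext fun x => (hp x).symm
        exact hinj h1
    rw [hset]
    exact isClosed_iInter fun x =>
      isClosed_eq ((hev x).comp continuous_fst) ((heval x).comp continuous_snd)
  have hcont : Continuous T := T.continuous_of_isClosed_graph hgraph
  let T' : lp (fun _ : X => ℝ) ⊤ →L[ℝ] H := ⟨T, hcont⟩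
  set C := ‖T'‖ with hC
  -- signed sums of the e y are bounded by C
  have hkey : ∀ (S : Finset X) (ε : X → ℝ), (∀ i, ε i = 1 ∨ ε i = -1) →
      ‖∑ y ∈ S, ε y • e y‖ ≤ C := by
    intro S ε hε
    set g₀ : X → ℝ := fun z => if z ∈ S then ε z else 0 with hg₀
    have hb : ∀ z, ‖g₀ z‖ ≤ 1 := by
      intro z
      simp only [hg₀]
      split
      · rcases hε z with h | h <;> simp [h]
      · simp
    have hmemg : Memℓp g₀ ⊤ :=
      memℓp_infty ⟨1, by rintro r ⟨z, rfl⟩; exact hb z⟩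
    set g : lp (fun _ : X => ℝ) ⊤ := ⟨g₀, hmemg⟩ with hg
    have hgnorm : ‖g‖ ≤ 1 := lp.norm_le_of_forall_le zero_le_one hb
    have hTg : T g = ∑ y ∈ S, ε y • e y := by
      apply hinj
      rw [hTeq]
      have h2 : ι (∑ y ∈ S, ε y • e y) = ∑ y ∈ S, ε y • ι (e y) := by
        rw [map_sum]
        exact Finset.sum_congr rfl fun y _ => by rw [map_smul]
      rw [h2]
      funext z
      have h3 : (∑ y ∈ S, ε y • ι (e y)) z = ∑ y ∈ S, ε y * (if z = y then 1 else 0) := by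
        rw [Finset.sum_apply]
        exact Finset.sum_congr rfl fun y _ => by rw [he y]; rfl
      rw [h3]
      have h4 : ∀ y ∈ S, ε y * (if z = y then 1 else 0) = if z = y then ε y else 0 := by
        intro y _; split <;> ring
      rw [Finset.sum_congr rfl h4, Finset.sum_ite_eq S z ε]
    calc ‖∑ y ∈ S, ε y • e y‖ = ‖T' g‖ := by rw [show T' g = T g from rfl, hTg]
      _ ≤ C * ‖g‖ := T'.le_opNorm g
      _ ≤ C * 1 := by
          have : (0:ℝ) ≤ C := norm_nonneg _
          nlinarith
      _ = C := mul_one C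
  have hsumsq : ∀ S : Finset X, ∑ y ∈ S, ‖e y‖ ^ 2 ≤ C ^ 2 := by
    intro S
    refine signs_sum_sq_le S e (C ^ 2) fun ε hε => ?_
    have h1 := hkey S ε hε
    have h2 : (0:ℝ) ≤ ‖∑ y ∈ S, ε y • e y‖ := norm_nonneg _
    nlinarith
  -- derive the contradiction on the infinite level set
  obtain ⟨S, hS, hScard⟩ := hninf.exists_subset_card_eq (⌈(n:ℝ)^2 * C^2⌉₊ + 1)
  have hcard : (S.card : ℝ) ≤ (n:ℝ)^2 * C^2 := by
    have h1 : ∀ y ∈ S, (1:ℝ) ≤ (n:ℝ)^2 * ‖e y‖^2 := by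
      intro y hy
      have h2 : ‖φ y‖ ≤ (n:ℝ) := hS hy
      have h3 := hlow y
      have h4 : (0:ℝ) ≤ ‖e y‖ := norm_nonneg _
      have h5 : (0:ℝ) ≤ ‖φ y‖ := norm_nonneg _
      nlinarith [mul_le_mul_of_nonneg_right h2 h4, sq_nonneg ((n:ℝ) * ‖e y‖ - 1)]
    calc (S.card : ℝ) = ∑ _y ∈ S, (1:ℝ) := by simp
      _ ≤ ∑ y ∈ S, (n:ℝ)^2 * ‖e y‖^2 := Finset.sum_le_sum h1
      _ = (n:ℝ)^2 * ∑ y ∈ S, ‖e y‖^2 := by rw [Finset.mul_sum]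
      _ ≤ (n:ℝ)^2 * C^2 := by
          have := hsumsq S
          have : (0:ℝ) ≤ (n:ℝ)^2 := sq_nonneg _
          nlinarith [hsumsq S, Finset.sum_nonneg (fun y (_ : y ∈ S) => sq_nonneg ‖e y‖)]
  rw [hScard] at hcard
  have hceil : (n:ℝ)^2 * C^2 ≤ (⌈(n:ℝ)^2 * C^2⌉₊ : ℝ) := Nat.le_ceil _
  push_cast at hcard
  linarith
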